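/- If (b_k)_{k≥0} is a sequence of complex numbers with lim_{k→∞} (|b_k| · k!)^{1/k} = 0, and a ≥ 0 is a real number, then the sequence c_t = Σ_{k=0}^∞ C(t+k, t) · (-1)^k · a^k · b_{k+t} is well-defined (the series converges absolutely) and satisfies lim_{t→∞} (|c_t| · t!)^{1/t} = 0. -/

import Mathlib

open Filter

lemma coeff_bound (b : ℕ → ℂ)
    (hb : Tendsto (fun k : ℕ => (‖b k‖ * k.factorial) ^ (1 / (k : ℝ)))
      atTop (nhds 0)) {ε : ℝ} (hε : 0 < ε) :
    ∃ C : ℝ, 1 ≤ C ∧ ∀ k : ℕ, ‖b k‖ * k.factorial ≤ C * ε ^ k := by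
  have h := hb.eventually (gt_mem_nhds hε)
  rw [eventually_atTop] at h
  obtain ⟨N, hN⟩ := h
  set M := max N 1 with hM
  set S := ∑ j ∈ Finset.range M, ‖b j‖ * j.factorial / ε ^ j with hS
  have hS0 : 0 ≤ S := Finset.sum_nonneg fun j _ => by positivity
  refine ⟨1 + S, by linarith, fun k => ?_⟩
  have hεk : (0:ℝ) < ε ^ k := by positivity
  by_cases hk : k < M
  · have h1 : ‖b k‖ * k.factorial / ε ^ k ≤ S :=
      Finset.single_le_sum (f := fun j => ‖b j‖ * j.factorial / ε ^ j)
        (fun j _ => by positivity) (Finset.mem_range.mpr hk)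
    rw [div_le_iff₀ hεk] at h1
    nlinarith
  · push_neg at hk
    have hk1 : 1 ≤ k := le_trans (le_max_right N 1) hk
    have hkN : N ≤ k := le_trans (le_max_left N 1) hk
    have h2 := hN k hkN
    have hx0 : (0:ℝ) ≤ ‖b k‖ * k.factorial := by positivity
    have h3 : (‖b k‖ * k.factorial) ^ (1 / (k : ℝ)) ≤ ε := le_of_lt h2
    have hk0 : (0:ℝ) < (k:ℝ) := by exact_mod_cast hk1
    have h4 : ((‖b k‖ * k.factorial) ^ (1 / (k : ℝ))) ^ (k:ℝ) ≤ ε ^ (k:ℝ) :=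
      Real.rpow_le_rpow (Real.rpow_nonneg hx0 _) h3 (le_of_lt hk0)
    rw [← Real.rpow_natCast ε k]
    rw [← Real.rpow_mul hx0, one_div, inv_mul_cancel₀ (ne_of_gt hk0), Real.rpow_one] at h4
    nlinarith

lemma term_bound (b : ℕ → ℂ) (a : ℝ) (ha : 0 ≤ a) {ε C : ℝ}
    (hC : ∀ k : ℕ, ‖b k‖ * k.factorial ≤ C * ε ^ k) (t k : ℕ) :
    ‖((t + k).choose t : ℂ) * (-1) ^ k * (a : ℂ) ^ k * b (k + t)‖ ≤
      (C * ε ^ t / t.factorial) * ((a * ε) ^ k / k.factorial) := by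
  have habs : ‖((t + k).choose t : ℂ) * (-1) ^ k * (a : ℂ) ^ k * b (k + t)‖ =
      ((t + k).choose t : ℝ) * a ^ k * ‖b (k + t)‖ := by
    simp [map_mul, map_pow, abs_of_nonneg ha]
  rw [habs]
  have hfac : ((t + k).choose t : ℝ) * t.factorial * k.factorial = (t + k).factorial := by
    have := Nat.choose_mul_factorial_mul_factorial (Nat.le_add_right t k)
    have h2 : t + k - t = k := by omega
    rw [h2] at this
    exact_mod_cast this
  have ht0 : (0:ℝ) < t.factorial := by exact_mod_cast t.factorial_pos
  have hk0 : (0:ℝ) < k.factorial := by exact_mod_cast k.factorial_pos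
  rw [div_mul_div_comm, le_div_iff₀ (by positivity)]
  have hb1 := hC (k + t)
  have hak : (0:ℝ) ≤ a ^ k := by positivity
  have key : ((t + k).choose t : ℝ) * a ^ k * ‖b (k + t)‖ *
      (t.factorial * k.factorial)
      = a ^ k * (‖b (k + t)‖ * (k + t).factorial) := by
    rw [show (k + t) = (t + k) by omega, ← hfac]; ring
  rw [key]
  calc a ^ k * (‖b (k + t)‖ * (k + t).factorial)
      ≤ a ^ k * (C * ε ^ (k + t)) := mul_le_mul_of_nonneg_left hb1 hak
    _ = C * ε ^ t * (a * ε) ^ k := by rw [pow_add, mul_pow]; ring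

lemma summable_terms (b : ℕ → ℂ) (a : ℝ) (ha : 0 ≤ a) {ε C : ℝ}
    (hC : ∀ k : ℕ, ‖b k‖ * k.factorial ≤ C * ε ^ k) (t : ℕ) :
    Summable (fun k : ℕ =>
      ‖((t + k).choose t : ℂ) * (-1) ^ k * (a : ℂ) ^ k * b (k + t)‖) :=
  Summable.of_nonneg_of_le (fun k => norm_nonneg _)
    (term_bound b a ha hC t)
    ((Real.summable_pow_div_factorial (a * ε)).mul_left _)

theorem conjugated_local_operator_coeffs (b : ℕ → ℂ) (a : ℝ) (ha : 0 ≤ a)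
    (hb : Tendsto (fun k : ℕ => (‖b k‖ * k.factorial) ^ (1 / (k : ℝ)))
      atTop (nhds 0)) :
    (∀ t : ℕ, Summable (fun k : ℕ =>
        ‖((t + k).choose t : ℂ) * (-1) ^ k * (a : ℂ) ^ k * b (k + t)‖)) ∧
    Tendsto (fun t : ℕ =>
        (‖∑' k : ℕ, ((t + k).choose t : ℂ) * (-1) ^ k * (a : ℂ) ^ k * b (k + t)‖
          * t.factorial) ^ (1 / (t : ℝ)))
      atTop (nhds 0) := by
  constructor
  · obtain ⟨C, hC1, hC⟩ := coeff_bound b hb one_pos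
    exact fun t => summable_terms b a ha hC t
  · -- key bound: for each δ > 0, get C' ≥ 1 with |c_t| * t! ≤ C' * δ^t
    have key : ∀ δ : ℝ, 0 < δ → ∃ C' : ℝ, 1 ≤ C' ∧ ∀ t : ℕ,
        ‖∑' k : ℕ, ((t + k).choose t : ℂ) * (-1) ^ k * (a : ℂ) ^ k * b (k + t)‖
          * t.factorial ≤ C' * δ ^ t := by
      intro δ hδ
      obtain ⟨C, hC1, hC⟩ := coeff_bound b hb hδ
      set E := ∑' k : ℕ, (a * δ) ^ k / k.factorial with hE
      have hEsum : Summable (fun k : ℕ => (a * δ) ^ k / k.factorial) :=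
        Real.summable_pow_div_factorial (a * δ)
      have hE1 : 1 ≤ E := by
        have := Summable.le_tsum hEsum 0 (fun j _ => by positivity)
        simpa using this
      refine ⟨C * E, le_trans hC1 (le_mul_of_one_le_right (by linarith) hE1), fun t => ?_⟩
      have ht0 : (0:ℝ) < t.factorial := by exact_mod_cast t.factorial_pos
      have hs := summable_terms b a ha hC t
      have h1 : ‖∑' k : ℕ,
          ((t + k).choose t : ℂ) * (-1) ^ k * (a : ℂ) ^ k * b (k + t)‖ ≤
          ∑' k : ℕ, ‖((t + k).choose t : ℂ) * (-1) ^ k * (a : ℂ) ^ k * b (k + t)‖ := by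
        have := norm_tsum_le_tsum_norm (f := fun k : ℕ =>
          ((t + k).choose t : ℂ) * (-1) ^ k * (a : ℂ) ^ k * b (k + t)) (by simpa using hs)
        simpa using this
      have h2 : ∑' k : ℕ,
          ‖((t + k).choose t : ℂ) * (-1) ^ k * (a : ℂ) ^ k * b (k + t)‖ ≤
          ∑' k : ℕ, (C * δ ^ t / t.factorial) * ((a * δ) ^ k / k.factorial) :=
        Summable.tsum_le_tsum (term_bound b a ha hC t) hs (hEsum.mul_left _)
      have h3 : ∑' k : ℕ, (C * δ ^ t / t.factorial) * ((a * δ) ^ k / k.factorial)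
          = (C * δ ^ t / t.factorial) * E := tsum_mul_left
      have h4 := (h1.trans (h2.trans_eq h3))
      calc ‖∑' k : ℕ,
            ((t + k).choose t : ℂ) * (-1) ^ k * (a : ℂ) ^ k * b (k + t)‖ * t.factorial
          ≤ (C * δ ^ t / t.factorial) * E * t.factorial :=
            mul_le_mul_of_nonneg_right h4 (le_of_lt ht0)
        _ = C * E * δ ^ t := by field_simp
    rw [Metric.tendsto_atTop]
    intro ε hε
    obtain ⟨C', hC'1, hbd⟩ := key (ε / 2) (by linarith)
    have hC'0 : (0:ℝ) < C' := lt_of_lt_of_le one_pos hC'1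
    have hroot : Tendsto (fun t : ℕ => C' ^ (1 / (t : ℝ))) atTop (nhds 1) := by
      have h5 : ∀ t : ℕ, C' ^ (1 / (t : ℝ)) = Real.exp (Real.log C' * (1 / (t : ℝ))) :=
        fun t => Real.rpow_def_of_pos hC'0 _
      simp only [h5]
      have h6 : Tendsto (fun t : ℕ => Real.log C' * (1 / (t : ℝ))) atTop (nhds 0) := by
        simpa using (tendsto_one_div_atTop_nhds_zero_nat).const_mul (Real.log C')
      simpa [Function.comp_def] using (Real.continuous_exp.tendsto 0).comp h6
    have hev : ∀ᶠ t : ℕ in atTop, C' ^ (1 / (t : ℝ)) < 3 / 2 :=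
      hroot.eventually_lt_const (by norm_num)
    rw [eventually_atTop] at hev
    obtain ⟨N, hN⟩ := hev
    refine ⟨max N 1, fun t ht => ?_⟩
    have ht1 : 1 ≤ t := le_trans (le_max_right N 1) ht
    have htN : N ≤ t := le_trans (le_max_left N 1) ht
    have h32 := hN t htN
    have ht0 : (0:ℝ) < (t:ℝ) := by exact_mod_cast ht1
    have hx0 : (0:ℝ) ≤ ‖∑' k : ℕ,
        ((t + k).choose t : ℂ) * (-1) ^ k * (a : ℂ) ^ k * b (k + t)‖ * t.factorial := by
      positivity
    rw [Real.dist_eq, sub_zero, abs_of_nonneg (Real.rpow_nonneg hx0 _)]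
    have h7 : (‖∑' k : ℕ,
        ((t + k).choose t : ℂ) * (-1) ^ k * (a : ℂ) ^ k * b (k + t)‖ * t.factorial)
        ^ (1 / (t : ℝ)) ≤ (C' * (ε / 2) ^ t) ^ (1 / (t : ℝ)) :=
      Real.rpow_le_rpow hx0 (hbd t) (by positivity)
    have h8 : (C' * (ε / 2) ^ t) ^ (1 / (t : ℝ)) = C' ^ (1 / (t : ℝ)) * (ε / 2) := by
      rw [Real.mul_rpow (le_of_lt hC'0) (by positivity), ← Real.rpow_natCast (ε / 2) t,
        ← Real.rpow_mul (by linarith), mul_one_div, div_self (ne_of_gt ht0), Real.rpow_one]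
    rw [h8] at h7
    have h9 : C' ^ (1 / (t : ℝ)) * (ε / 2) < (3 / 2) * (ε / 2) :=
      mul_lt_mul_of_pos_right h32 (by linarith)
    linarith
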